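/- For any two acyclic orientations A and B of an interval hypergraph 𝕀 on [n], A ≤ B in the hypergraphic poset P_𝕀 if and only if A(I) ≤ B(I) for all I ∈ 𝕀. -/

import Mathlib

namespace IHL

/-- The hyperedges of a hypergraph, as a subtype. -/
abbrev Edge (𝕀 : Finset (Finset ℕ)) : Type := {H : Finset ℕ // H ∈ 𝕀}

/-- `ℋ` is a hypergraph on `[n] = {1,…,n}`: hyperedges are nonempty subsets of `[n]`
and all singletons belong to `ℋ`. -/
def IsHypergraph (n : ℕ) (ℋ : Finset (Finset ℕ)) : Prop :=
  (∀ H ∈ ℋ, H.Nonempty ∧ H ⊆ Finset.Icc 1 n) ∧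
    ∀ i, 1 ≤ i → i ≤ n → ({i} : Finset ℕ) ∈ ℋ

/-- `𝕀` is an interval hypergraph on `[n]`: hyperedges are intervals `[a,b] ⊆ [n]`
and all singletons belong to `𝕀`. -/
def IsIntervalHypergraph (n : ℕ) (𝕀 : Finset (Finset ℕ)) : Prop :=
  (∀ H ∈ 𝕀, ∃ a b, 1 ≤ a ∧ a ≤ b ∧ b ≤ n ∧ H = Finset.Icc a b) ∧
    ∀ i, 1 ≤ i → i ≤ n → ({i} : Finset ℕ) ∈ 𝕀

/-- An orientation assigns to each hyperedge one of its elements. -/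
def IsOrientation (𝕀 : Finset (Finset ℕ)) (O : Edge 𝕀 → ℕ) : Prop :=
  ∀ H : Edge 𝕀, O H ∈ H.1

/-- Acyclicity: there is no cyclic sequence `H_0, …, H_k` with `k ≥ 2`, `H_k = H_0`, and
`O (H (p+1)) ∈ H p \ {O (H p)}` for all `p < k`. -/
def IsAcyclic (𝕀 : Finset (Finset ℕ)) (O : Edge 𝕀 → ℕ) : Prop :=
  ¬∃ (k : ℕ) (H : ℕ → Edge 𝕀), 2 ≤ k ∧ H k = H 0 ∧
    ∀ p < k, O (H (p + 1)) ∈ (H p).1 ∧ O (H (p + 1)) ≠ O (H p)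

/-- An acyclic orientation, i.e. an element of the hypergraphic poset. -/
def AcycOr (𝕀 : Finset (Finset ℕ)) (O : Edge 𝕀 → ℕ) : Prop :=
  IsOrientation 𝕀 O ∧ IsAcyclic 𝕀 O

/-- Increasing flip from `O` to `O'` flipping `i` to `j`. -/
def IsIncFlip (n : ℕ) (𝕀 : Finset (Finset ℕ)) (i j : ℕ) (O O' : Edge 𝕀 → ℕ) : Prop :=
  O ≠ O' ∧ 1 ≤ i ∧ i < j ∧ j ≤ n ∧
    ∀ H : Edge 𝕀,
      (O H ≠ O' H → O H = i ∧ O' H = j) ∧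
      (i ∈ H.1 → j ∈ H.1 → (O H = i ↔ O' H = j))

/-- One increasing flip step between acyclic orientations. -/
def FlipStep (n : ℕ) (𝕀 : Finset (Finset ℕ)) (O O' : Edge 𝕀 → ℕ) : Prop :=
  AcycOr 𝕀 O ∧ AcycOr 𝕀 O' ∧ ∃ i j, IsIncFlip n 𝕀 i j O O'

/-- The order of the hypergraphic poset `P_𝕀`: reflexive-transitive closure of
the increasing flip relation on acyclic orientations. -/
def leP (n : ℕ) (𝕀 : Finset (Finset ℕ)) : (Edge 𝕀 → ℕ) → (Edge 𝕀 → ℕ) → Prop :=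
  Relation.ReflTransGen (FlipStep n 𝕀)

/-- Strict order of the hypergraphic poset. -/
def ltP (n : ℕ) (𝕀 : Finset (Finset ℕ)) (A B : Edge 𝕀 → ℕ) : Prop :=
  leP n 𝕀 A B ∧ A ≠ B

/-- `B` covers `A` in `P_𝕀`. -/
def CoversP (n : ℕ) (𝕀 : Finset (Finset ℕ)) (A B : Edge 𝕀 → ℕ) : Prop :=
  ltP n 𝕀 A B ∧ ¬∃ C, AcycOr 𝕀 C ∧ ltP n 𝕀 A C ∧ ltP n 𝕀 C B

/-- `𝕀` is closed under intersection. -/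
def ClosedUnderIntersection (𝕀 : Finset (Finset ℕ)) : Prop :=
  ∀ I ∈ 𝕀, ∀ J ∈ 𝕀, (I ∩ J).Nonempty → I ∩ J ∈ 𝕀

/-- `π` is a permutation of `[n]` (it fixes everything outside `[1,n]`). -/
def IsPermOn (n : ℕ) (π : Equiv.Perm ℕ) : Prop :=
  ∀ x, x ∉ Finset.Icc 1 n → π x = x

/-- The surjection `Or` from permutations to acyclic orientations:
`Or_π (H) = π (min {p : π p ∈ H})`. -/
noncomputable def orMap (𝕀 : Finset (Finset ℕ)) (π : Equiv.Perm ℕ) : Edge 𝕀 → ℕ :=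
  fun H => π (sInf {p | π p ∈ H.1})

/-- The weak order on permutations of `[n]`, via inclusion of inversion sets. -/
def weakLe (n : ℕ) (σ τ : Equiv.Perm ℕ) : Prop :=
  ∀ a b, 1 ≤ a → a < b → b ≤ n → σ.symm b < σ.symm a → τ.symm b < τ.symm a

/-- `π` contains the pattern 231. -/
def Contains231 (n : ℕ) (π : Equiv.Perm ℕ) : Prop :=
  ∃ p q r, 1 ≤ p ∧ p < q ∧ q < r ∧ r ≤ n ∧ π r < π p ∧ π p < π q

/-- `π` contains the pattern 213. -/
def Contains213 (n : ℕ) (π : Equiv.Perm ℕ) : Prop :=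
  ∃ p q r, 1 ≤ p ∧ p < q ∧ q < r ∧ r ≤ n ∧ π q < π p ∧ π p < π r

/-- The partial order `≺_A`: transitive closure of `A H ≺ h` for `h ∈ H \ {A H}`. -/
def prec (𝕀 : Finset (Finset ℕ)) (A : Edge 𝕀 → ℕ) : ℕ → ℕ → Prop :=
  Relation.TransGen fun a b => ∃ H : Edge 𝕀, A H = a ∧ b ∈ H.1 ∧ b ≠ a

/-- The distributivity condition on interval hypergraphs: for all `I, J ∈ 𝕀` with
`I ⊈ J`, `J ⊈ I` and `I ∩ J ≠ ∅`, the intersection `I ∩ J` is in `𝕀` and is initial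
or final in any `K ∈ 𝕀` containing it. -/
def IsDistribHG (𝕀 : Finset (Finset ℕ)) : Prop :=
  ∀ I ∈ 𝕀, ∀ J ∈ 𝕀, ¬I ⊆ J → ¬J ⊆ I → (I ∩ J).Nonempty →
    (I ∩ J ∈ 𝕀 ∧ ∀ K ∈ 𝕀, I ∩ J ⊆ K → ((I ∩ J).min = K.min ∨ (I ∩ J).max = K.max))

/-- `j ∈ 𝒥_𝕀 = ⋃_{I ∈ 𝕀} (I \ {min I})`. -/
def InJI (𝕀 : Finset (Finset ℕ)) (j : ℕ) : Prop :=
  ∃ I ∈ 𝕀, j ∈ I ∧ ∃ y ∈ I, y < j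

/-- `Jj` is the interval `J_j = ⋂ {I ∈ 𝕀 : j ∈ I \ {min I}}`. -/
def IsJj (𝕀 : Finset (Finset ℕ)) (j : ℕ) (Jj : Finset ℕ) : Prop :=
  ∀ x, x ∈ Jj ↔ ∀ I ∈ 𝕀, j ∈ I → (∃ y ∈ I, y < j) → x ∈ I

/-- `Aj` is the orientation `A_j` (where `μj = min J_j`):
`A_j (J) = j` if `j ∈ J` and `min J = μ_j`, and `A_j (J) = min J` otherwise. -/
def IsAj (𝕀 : Finset (Finset ℕ)) (j μj : ℕ) (Aj : Edge 𝕀 → ℕ) : Prop :=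
  ∀ J : Edge 𝕀,
    (j ∈ J.1 ∧ IsLeast (J.1 : Set ℕ) μj → Aj J = j) ∧
    (¬(j ∈ J.1 ∧ IsLeast (J.1 : Set ℕ) μj) → IsLeast (J.1 : Set ℕ) (Aj J))

/-- `Jij` is the interval `J_{ij} = ⋂ {I ∈ 𝕀 : {i,j} ⊆ I}`. -/
def IsJij (𝕀 : Finset (Finset ℕ)) (i j : ℕ) (Jij : Finset ℕ) : Prop :=
  ∀ x, x ∈ Jij ↔ ∀ I ∈ 𝕀, i ∈ I → j ∈ I → x ∈ I

/-- `(i,j) ∈ ℐ𝒥_𝕀`, where `μij = min J_{ij}`: both lie in a common hyperedge and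
`i = max ([μ_{ij}, j) \ ⋃ {J \ {min J} : J ∈ 𝕀, J ⊆ [μ_{ij}, j)})`. -/
def InIJ (n : ℕ) (𝕀 : Finset (Finset ℕ)) (i j μij : ℕ) : Prop :=
  1 ≤ i ∧ i < j ∧ j ≤ n ∧ (∃ I ∈ 𝕀, i ∈ I ∧ j ∈ I) ∧
    IsGreatest {m | μij ≤ m ∧ m < j ∧
      ∀ J ∈ 𝕀, (∀ x ∈ J, μij ≤ x ∧ x < j) → m ∈ J → ∀ y ∈ J, m ≤ y} i

/-- `Aij` is the orientation `A_{ij}` (where `μij = min J_{ij}`):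
`A_{ij} (J) = j` if `j ∈ J` and `min J ≥ μ_{ij}`, and `A_{ij} (J) = min J` otherwise. -/
def IsAij (𝕀 : Finset (Finset ℕ)) (j μij : ℕ) (Aij : Edge 𝕀 → ℕ) : Prop :=
  ∀ J : Edge 𝕀,
    (j ∈ J.1 ∧ (∀ x ∈ J.1, μij ≤ x) → Aij J = j) ∧
    (¬(j ∈ J.1 ∧ (∀ x ∈ J.1, μij ≤ x)) → IsLeast (J.1 : Set ℕ) (Aij J))

/-- The reversal `x ↦ n - x + 1` on `[n]`. -/
def revPt (n x : ℕ) : ℕ := n - x + 1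

/-- The reversed hypergraph `ℋ↔`. -/
def revHG (n : ℕ) (ℋ : Finset (Finset ℕ)) : Finset (Finset ℕ) :=
  ℋ.image fun H => H.image (revPt n)

section StmtEightAux

variable {n : ℕ} {𝕀 : Finset (Finset ℕ)}

/-- Hyperedges of an interval hypergraph are order-convex. -/
lemma interval_convex (h𝕀 : IsIntervalHypergraph n 𝕀) (H : Edge 𝕀) {x y z : ℕ}
    (hx : x ∈ H.1) (hy : y ∈ H.1) (hxz : x ≤ z) (hzy : z ≤ y) : z ∈ H.1 := by
  obtain ⟨a, b, _, _, _, hH⟩ := h𝕀.1 H.1 H.2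
  rw [hH] at hx hy ⊢
  simp only [Finset.mem_Icc] at *
  omega

/-- No 2-cycles condition. -/
def TwoCycFree (𝕀 : Finset (Finset ℕ)) (O : Edge 𝕀 → ℕ) : Prop :=
  ∀ P Q : Edge 𝕀, O P ∈ Q.1 → O Q ∈ P.1 → O P ≠ O Q → False

/-- A cycle of length `k`. -/
def Cyc (𝕀 : Finset (Finset ℕ)) (O : Edge 𝕀 → ℕ) (k : ℕ) (H : ℕ → Edge 𝕀) : Prop :=
  H k = H 0 ∧ ∀ p < k, O (H (p + 1)) ∈ (H p).1 ∧ O (H (p + 1)) ≠ O (H p)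

lemma twoCycFree_of_acyclic {O : Edge 𝕀 → ℕ} (hac : IsAcyclic 𝕀 O) : TwoCycFree 𝕀 O := by
  intro P Q h1 h2 hne
  apply hac
  refine ⟨2, fun p => if p % 2 = 0 then P else Q, le_refl 2, by norm_num, ?_⟩
  intro p hp
  interval_cases p
  · simpa using ⟨h2, fun h => hne h.symm⟩
  · simpa using ⟨h1, hne⟩

/-- Cycles can be rotated. -/
lemma Cyc.rot {O : Edge 𝕀 → ℕ} {k : ℕ} {H : ℕ → Edge 𝕀} (hk : 2 ≤ k)
    (h : Cyc 𝕀 O k H) (s : ℕ) : Cyc 𝕀 O k (fun p => H ((p + s) % k)) := by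
  obtain ⟨hc, hs⟩ := h
  have hk0 : 0 < k := by omega
  have key : ∀ q, q < k → H ((q + 1) % k) = H (q + 1) := by
    intro q hq
    rcases Nat.lt_or_ge (q + 1) k with h' | h'
    · rw [Nat.mod_eq_of_lt h']
    · have hqk : q + 1 = k := by omega
      rw [hqk, Nat.mod_self, hc]
  constructor
  · show H ((k + s) % k) = H ((0 + s) % k)
    rw [Nat.zero_add, Nat.add_comm k s, Nat.add_mod_right]
  · intro p hp
    have hq : (p + s) % k < k := Nat.mod_lt _ hk0
    have h1 : (p + 1 + s) % k = ((p + s) % k + 1) % k := by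
      conv_lhs => rw [show p + 1 + s = p + s + 1 by ring]
      rw [Nat.add_mod (p + s) 1 k, Nat.add_mod ((p + s) % k) 1 k,
        Nat.mod_mod_of_dvd _ (dvd_refl k)]
    simp only
    rw [h1, key _ hq]
    exact hs _ hq

/-- For orientations of interval hypergraphs, no 2-cycles implies acyclicity. -/
lemma acyclic_of_twoCycFree (h𝕀 : IsIntervalHypergraph n 𝕀) {O : Edge 𝕀 → ℕ}
    (hO : IsOrientation 𝕀 O) (h2 : TwoCycFree 𝕀 O) : IsAcyclic 𝕀 O := by
  have main : ∀ k (H : ℕ → Edge 𝕀), 2 ≤ k → Cyc 𝕀 O k H → False := by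
    intro k
    induction k using Nat.strong_induction_on with
    | _ k IH =>
      intro H hk hcyc
      rcases eq_or_lt_of_le hk with hk2 | hk3
      · -- k = 2
        obtain ⟨hc, hs⟩ := hcyc
        have s0 := hs 0 (by omega)
        have s1 := hs 1 (by omega)
        simp only [show (0:ℕ) + 1 = 1 from rfl, show (1:ℕ) + 1 = 2 from rfl] at s0 s1
        rw [← hk2] at hc
        rw [hc] at s1
        exact h2 (H 1) (H 0) s0.1 s1.1 (fun h => s1.2 h.symm)
      · -- 3 ≤ k : rotate the maximum value to position 1
        obtain ⟨m0, hm0mem, hm0⟩ := Finset.exists_max_image (Finset.range k)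
          (fun p => O (H p)) ⟨0, Finset.mem_range.mpr (by omega)⟩
        rw [Finset.mem_range] at hm0mem
        set s := m0 + (k - 1) with hs_def
        set H' : ℕ → Edge 𝕀 := fun p => H ((p + s) % k) with hH'_def
        have hcyc' : Cyc 𝕀 O k H' := hcyc.rot hk s
        have hH'1 : H' 1 = H m0 := by
          simp only [hH'_def]
          congr 1
          have : 1 + s = m0 + k := by omega
          rw [this, Nat.add_mod_right, Nat.mod_eq_of_lt hm0mem]
        have hmax : ∀ p, p < k → O (H' p) ≤ O (H' 1) := by
          intro p hp
          rw [hH'1]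
          exact hm0 _ (Finset.mem_range.mpr (Nat.mod_lt _ (by omega)))
        obtain ⟨hc', hs'⟩ := hcyc'
        have st0 := hs' 0 (by omega)
        have st1 := hs' 1 (by omega)
        -- st0 : O (H' 1) ∈ (H' 0).1 ∧ O (H' 1) ≠ O (H' 0)
        -- st1 : O (H' 2) ∈ (H' 1).1 ∧ O (H' 2) ≠ O (H' 1)
        have hv0 : O (H' 0) ∈ (H' 0).1 := hO _
        have hv1 : O (H' 1) ∈ (H' 1).1 := hO _
        have h0max : O (H' 0) ≤ O (H' 1) := hmax 0 (by omega)
        have h2max : O (H' 2) ≤ O (H' 1) := hmax 2 hk3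
        rcases lt_trichotomy (O (H' 2)) (O (H' 0)) with hlt | heq | hgt
        · -- case (a): O(H'2) < O(H'0) : direct 2-cycle between H' 0 and H' 1
          have h00 : O (H' 0) ∈ (H' 1).1 :=
            interval_convex h𝕀 (H' 1) st1.1 hv1 (le_of_lt hlt) h0max
          exact h2 (H' 0) (H' 1) h00 st0.1 (fun h => st0.2 h.symm)
        · -- case (c): O(H'2) = O(H'0) : drop two steps
          rcases eq_or_lt_of_le (show 3 ≤ k from hk3) with hk3' | hk4
          · -- k = 3 : contradiction
            have st2 := hs' 2 (by omega)
            rw [← hk3'] at hc'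
            rw [show (2:ℕ) + 1 = 3 by rfl, hc'] at st2
            exact st2.2 heq.symm
          · -- k ≥ 4 : cycle of length k - 2
            set H'' : ℕ → Edge 𝕀 := fun p => if p < k - 2 then H' (p + 2) else H' 2
              with hH''_def
            have hcyc'' : Cyc 𝕀 O (k - 2) H'' := by
              constructor
              · have e1 : H'' (k - 2) = H' 2 := by
                  simp only [hH''_def]; rw [if_neg (lt_irrefl _)]
                have e0 : H'' 0 = H' 2 := by
                  simp only [hH''_def]; rw [if_pos (by omega)]
                rw [e1, e0]
              · intro p hp
                have hpk : H'' p = H' (p + 2) := by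
                  simp only [hH''_def]; rw [if_pos hp]
                rcases Nat.lt_or_ge (p + 1) (k - 2) with h' | h'
                · have e : H'' (p + 1) = H' (p + 1 + 2) := by
                    simp only [hH''_def]; rw [if_pos h']
                  rw [hpk, e, show p + 1 + 2 = p + 2 + 1 by omega]
                  exact hs' (p + 2) (by omega)
                · have hpeq : p + 1 = k - 2 := by omega
                  have : H'' (p + 1) = H' 2 := by
                    simp only [hH''_def]; rw [if_neg (by omega)]
                  rw [hpk, this]
                  have hlast := hs' (k - 1) (by omega)
                  have hkk : k - 1 + 1 = k := by omega
                  rw [hkk, hc'] at hlast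
                  have hO2 : O (H' 2) = O (H' 0) := heq
                  rw [hO2]
                  have hp2 : p + 2 = k - 1 := by omega
                  rw [hp2]
                  exact hlast
            exact IH (k - 2) (by omega) H'' (by omega) hcyc''
        · -- case (b): O(H'0) < O(H'2) : skip position 1
          set H'' : ℕ → Edge 𝕀 := fun p => if p = 0 then H' 0 else H' (p + 1) with hH''_def
          have hcyc'' : Cyc 𝕀 O (k - 1) H'' := by
            constructor
            · have e1 : H'' (k - 1) = H' k := by
                simp only [hH''_def]; rw [if_neg (by omega), show k - 1 + 1 = k by omega]
              have e0 : H'' 0 = H' 0 := by simp [hH''_def]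
              rw [e1, e0, hc']
            · intro p hp
              rcases Nat.eq_zero_or_pos p with rfl | hppos
              · have e1 : H'' 1 = H' 2 := by simp only [hH''_def]; rw [if_neg (by omega)]
                have e0 : H'' 0 = H' 0 := by simp [hH''_def]
                rw [e1, e0]
                constructor
                · exact interval_convex h𝕀 (H' 0) hv0 st0.1 (le_of_lt hgt) h2max
                · omega
              · have e1 : H'' (p + 1) = H' (p + 2) := by
                  simp only [hH''_def]; rw [if_neg (by omega)]
                have e0 : H'' p = H' (p + 1) := by
                  simp only [hH''_def]; rw [if_neg (by omega)]
                rw [e1, e0]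
                exact hs' (p + 1) (by omega)
          exact IH (k - 1) (by omega) H'' (by omega) hcyc''
  intro ⟨k, H, hk, hc, hsteps⟩
  exact main k H hk ⟨hc, hsteps⟩

end StmtEightAux

section StmtEightMain

variable {n : ℕ} {𝕀 : Finset (Finset ℕ)}

/-- Key step: if `A ≤ B` pointwise and `A ≠ B`, there is an increasing flip from `A`
which stays pointwise below `B`. -/
lemma exists_flipStep (h𝕀 : IsIntervalHypergraph n 𝕀) {A B : Edge 𝕀 → ℕ}
    (hA : AcycOr 𝕀 A) (hB : AcycOr 𝕀 B) (hle : ∀ H, A H ≤ B H) (hne : A ≠ B) :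
    ∃ A', FlipStep n 𝕀 A A' ∧ (∀ H, A' H ≤ B H) ∧ (∀ H, A H ≤ A' H) ∧
      ∃ H₀ : Edge 𝕀, A H₀ < A' H₀ := by
  classical
  have hA2 : TwoCycFree 𝕀 A := twoCycFree_of_acyclic hA.2
  have hB2 : TwoCycFree 𝕀 B := twoCycFree_of_acyclic hB.2
  -- the set of edges where A and B differ
  set S : Finset (Edge 𝕀) := 𝕀.attach.filter (fun H => A H ≠ B H) with hS_def
  have hSne : S.Nonempty := by
    obtain ⟨H, hH⟩ := Function.ne_iff.mp hne
    exact ⟨H, by simp [hS_def, hH]⟩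
  obtain ⟨H₂, hH₂S, hH₂max⟩ := Finset.exists_max_image S A hSne
  set i := A H₂ with hi_def
  set T : Finset (Edge 𝕀) := S.filter (fun H => A H = i) with hT_def
  have hTne : T.Nonempty := ⟨H₂, by simp [hT_def, hH₂S, hi_def]⟩
  obtain ⟨H₁, hH₁T, hH₁max⟩ := Finset.exists_max_image T B hTne
  set j := B H₁ with hj_def
  have hH₁S : H₁ ∈ S := (Finset.mem_filter.mp hH₁T).1
  have hAH₁ : A H₁ = i := (Finset.mem_filter.mp hH₁T).2
  have hABne : A H₁ ≠ B H₁ := (Finset.mem_filter.mp hH₁S).2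
  have hij : i < j := lt_of_le_of_ne (hAH₁ ▸ hle H₁) (hAH₁ ▸ hABne)
  -- maximality facts
  have M1 : ∀ K : Edge 𝕀, A K ≠ B K → A K ≤ i := by
    intro K hK
    exact hH₂max K (Finset.mem_filter.mpr ⟨Finset.mem_attach _ _, hK⟩)
  have M2 : ∀ K : Edge 𝕀, A K = i → A K ≠ B K → B K ≤ j := by
    intro K hKi hK
    exact hH₁max K (Finset.mem_filter.mpr ⟨Finset.mem_filter.mpr
      ⟨Finset.mem_attach _ _, hK⟩, hKi⟩)
  have hiH₁ : i ∈ H₁.1 := hAH₁ ▸ hA.1 H₁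
  have hjH₁ : j ∈ H₁.1 := hB.1 H₁
  -- the flipped orientation
  set flp : Edge 𝕀 → Prop := fun K => i ∈ K.1 ∧ j ∈ K.1 ∧ A K = i with hflp_def
  set A' : Edge 𝕀 → ℕ := fun K => if flp K then j else A K with hA'_def
  have hflpH₁ : flp H₁ := ⟨hiH₁, hjH₁, hAH₁⟩
  have hA'flip : ∀ K, flp K → A' K = j := fun K hK => by
    simp only [hA'_def]; rw [if_pos hK]
  have hA'not : ∀ K, ¬flp K → A' K = A K := fun K hK => by
    simp only [hA'_def]; rw [if_neg hK]
  -- F1 : no edge contains i and j and has A-value j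
  have F1 : ∀ K : Edge 𝕀, i ∈ K.1 → j ∈ K.1 → A K ≠ j := by
    intro K hiK hjK hAK
    exact hA2 H₁ K (hAH₁ ▸ hiK) (hAK ▸ hjH₁) (by rw [hAH₁, hAK]; omega)
  -- F2 : flipped edges have B-value at least j
  have F2 : ∀ K : Edge 𝕀, flp K → j ≤ B K := by
    intro K hK
    by_contra hBK
    push_neg at hBK
    have hiBK : i ≤ B K := hK.2.2 ▸ hle K
    have hBKH₁ : B K ∈ H₁.1 := interval_convex h𝕀 H₁ hiH₁ hjH₁ hiBK (le_of_lt hBK)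
    exact hB2 K H₁ hBKH₁ hK.2.1 (by omega)
  -- A' is an orientation
  have hA'or : IsOrientation 𝕀 A' := by
    intro K
    by_cases hK : flp K
    · rw [hA'flip K hK]; exact hK.2.1
    · rw [hA'not K hK]; exact hA.1 K
  -- the two-cycle-free key step
  have key : ∀ P Q : Edge 𝕀, flp P → ¬flp Q → j ∈ Q.1 → A Q ∈ P.1 → A Q ≠ j → False := by
    intro P Q hP hQ hjQ hAQP hAQj
    have hAQQ : A Q ∈ Q.1 := hA.1 Q
    rcases lt_trichotomy (A Q) i with hlt | heq | hgt
    · -- A Q < i : two-cycle in A between P and Q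
      have hiQ : i ∈ Q.1 := interval_convex h𝕀 Q hAQQ hjQ (le_of_lt hlt) (le_of_lt hij)
      exact hA2 P Q (hP.2.2 ▸ hiQ) hAQP (by rw [hP.2.2]; omega)
    · -- A Q = i : Q would be flipped
      exact hQ ⟨heq ▸ hAQQ, hjQ, heq⟩
    · -- i < A Q
      have hABQ : A Q = B Q := by
        by_contra hneq
        exact absurd (M1 Q hneq) (by omega)
      rcases lt_or_ge (A Q) j with hltj | hgej
      · -- i < A Q < j : two-cycle in B between Q and H₁
        have hbH₁ : B Q ∈ H₁.1 :=
          interval_convex h𝕀 H₁ hiH₁ hjH₁ (hABQ ▸ le_of_lt hgt) (hABQ ▸ le_of_lt hltj)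
        exact hB2 Q H₁ hbH₁ hjQ (by rw [← hABQ, ← hj_def]; omega)
      · -- j ≤ A Q, hence j < A Q
        have hgtj : j < A Q := lt_of_le_of_ne hgej (Ne.symm hAQj)
        -- B P = j
        have hBPj : B P = j := by
          have h1 : j ≤ B P := F2 P hP
          have h2' : A P ≠ B P := by rw [hP.2.2]; omega
          have h3 : B P ≤ j := M2 P hP.2.2 h2'
          omega
        exact hB2 P Q (hBPj ▸ hjQ) (hABQ ▸ hAQP) (by omega)
  -- A' is two-cycle-free, hence acyclic
  have hA'2 : TwoCycFree 𝕀 A' := by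
    intro P Q h1 h2 hne'
    by_cases hP : flp P <;> by_cases hQ : flp Q
    · rw [hA'flip P hP, hA'flip Q hQ] at hne'; exact hne' rfl
    · rw [hA'flip P hP] at h1 hne'
      rw [hA'not Q hQ] at h2 hne'
      exact key P Q hP hQ h1 h2 (Ne.symm hne')
    · rw [hA'flip Q hQ] at h2 hne'
      rw [hA'not P hP] at h1 hne'
      exact key Q P hQ hP h2 h1 hne'
    · rw [hA'not P hP] at h1 hne'
      rw [hA'not Q hQ] at h2 hne'
      exact hA2 P Q h1 h2 hne'
  have hA'ac : AcycOr 𝕀 A' := ⟨hA'or, acyclic_of_twoCycFree h𝕀 hA'or hA'2⟩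
  -- bounds for i and j
  have hiIcc : i ∈ Finset.Icc 1 n := by
    obtain ⟨a, b, ha, hab, hbn, hH⟩ := h𝕀.1 H₁.1 H₁.2
    have := hiH₁
    rw [hH] at this
    simp only [Finset.mem_Icc] at this ⊢
    omega
  have hjIcc : j ∈ Finset.Icc 1 n := by
    obtain ⟨a, b, ha, hab, hbn, hH⟩ := h𝕀.1 H₁.1 H₁.2
    have := hjH₁
    rw [hH] at this
    simp only [Finset.mem_Icc] at this ⊢
    omega
  have hA'H₁ : A' H₁ = j := hA'flip H₁ hflpH₁
  have hAA'ne : A ≠ A' := by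
    intro h
    rw [h, hA'H₁] at hAH₁
    omega
  -- the increasing flip
  have hflip : IsIncFlip n 𝕀 i j A A' := by
    refine ⟨hAA'ne, (Finset.mem_Icc.mp hiIcc).1, hij, (Finset.mem_Icc.mp hjIcc).2, ?_⟩
    intro K
    constructor
    · intro hKne
      by_cases hK : flp K
      · exact ⟨hK.2.2, hA'flip K hK⟩
      · exact absurd (hA'not K hK).symm hKne
    · intro hiK hjK
      constructor
      · intro hAKi
        exact hA'flip K ⟨hiK, hjK, hAKi⟩
      · intro hA'K
        by_cases hK : flp K
        · exact hK.2.2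
        · rw [hA'not K hK] at hA'K
          exact absurd hA'K (F1 K hiK hjK)
  refine ⟨A', ⟨hA, hA'ac, i, j, hflip⟩, ?_, ?_, ⟨H₁, ?_⟩⟩
  · intro K
    by_cases hK : flp K
    · rw [hA'flip K hK]; exact F2 K hK
    · rw [hA'not K hK]; exact hle K
  · intro K
    by_cases hK : flp K
    · rw [hA'flip K hK, hK.2.2]; omega
    · rw [hA'not K hK]
  · rw [hA'H₁, hAH₁]; exact hij

end StmtEightMain


/-- Induction on the total gap. -/
lemma leP_of_pointwise_le_aux {n : ℕ} {𝕀 : Finset (Finset ℕ)}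
    (h𝕀 : IsIntervalHypergraph n 𝕀) {B : Edge 𝕀 → ℕ} (hB : AcycOr 𝕀 B) :
    ∀ M (A : Edge 𝕀 → ℕ), AcycOr 𝕀 A → (∀ H, A H ≤ B H) →
      (∑ H ∈ 𝕀.attach, (B H - A H)) ≤ M → leP n 𝕀 A B := by
  intro M
  induction M with
  | zero =>
    intro A hA hle hsum
    have hAB : A = B := by
      funext H
      have h0 : B H - A H = 0 := by
        have := Finset.sum_eq_zero_iff.mp (Nat.le_zero.mp hsum) H (Finset.mem_attach _ _)
        exact this
      have := hle H
      omega
    rw [hAB]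
    exact Relation.ReflTransGen.refl
  | succ M IH =>
    intro A hA hle hsum
    by_cases hAB : A = B
    · rw [hAB]
      exact Relation.ReflTransGen.refl
    · obtain ⟨A', hstep, hle', hmono, H₀, hstrict⟩ :=
        exists_flipStep h𝕀 hA hB hle hAB
      have hA' : AcycOr 𝕀 A' := hstep.2.1
      have hsum' : (∑ H ∈ 𝕀.attach, (B H - A' H)) < ∑ H ∈ 𝕀.attach, (B H - A H) := by
        apply Finset.sum_lt_sum
        · intro H _
          have := hmono H
          have := hle' H
          omega
        · refine ⟨H₀, Finset.mem_attach _ _, ?_⟩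
          have := hle' H₀
          omega
      exact Relation.ReflTransGen.head hstep (IH A' hA' hle' (by omega))


/-- For acyclic orientations `A, B` of an interval hypergraph `𝕀`,
`A ≤ B` in `P_𝕀` iff `A(I) ≤ B(I)` for all `I ∈ 𝕀`. -/
theorem stmt8 (n : ℕ) (hn : 1 ≤ n) (𝕀 : Finset (Finset ℕ))
    (h𝕀 : IsIntervalHypergraph n 𝕀) (A B : Edge 𝕀 → ℕ)
    (hA : AcycOr 𝕀 A) (hB : AcycOr 𝕀 B) :
    leP n 𝕀 A B ↔ ∀ H : Edge 𝕀, A H ≤ B H := by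
  constructor
  · intro h
    clear hA hB
    induction h with
    | refl => intro H; exact le_refl _
    | @tail b c _ hstep ih =>
      intro H
      refine le_trans (ih H) ?_
      obtain ⟨_, _, i, j, hflip⟩ := hstep
      obtain ⟨_, _, hij, _, hcond⟩ := hflip
      by_cases hne : b H = c H
      · exact le_of_eq hne
      · obtain ⟨h1, h2⟩ := (hcond H).1 hne
        rw [h1, h2]
        omega
  · intro h
    exact leP_of_pointwise_le_aux h𝕀 hB _ A hA h (le_refl _)
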